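/- arXiv:math/9201204 — 3 statements merged into one kernel-verified Lean document; each statement's English description precedes it below -/
import Mathlib

section
/- Let (u_i)_{i=1}^m be unit vectors in R^n and (c_i)_{i=1}^m positive reals with Σ c_i (u_i ⊗ u_i) = I_n, and let (α_i)_{i=1}^m be positive reals. Then the zonotope Z = Σ_{i=1}^m α_i [−u_i, u_i] (Minkowski sum of segments) has volume |Z| ≥ 2^n Π_{i=1}^m (α_i / c_i)^{c_i}. -/
open MeasureTheory
open scoped RealInnerProductSpace BigOperators

open Matrix Finset Equiv Real

set_option maxHeartbeats 1000000

theorem my_rpow_sum {ι : Type*} (s : Finset ι) {r : ℝ} (hr : 0 < r) (x : ι → ℝ) :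
    r ^ (∑ i ∈ s, x i) = ∏ i ∈ s, r ^ (x i) := by
  classical
  induction s using Finset.cons_induction with
  | empty => simp
  | cons a s ha ih => rw [Finset.sum_cons, Finset.prod_cons, Real.rpow_add hr, ih]


/-- symmetrized Cauchy-Binet -/
theorem my_cb {n m : ℕ} (u' : Fin m → Fin n → ℝ) (b : Fin m → ℝ) :
    (n.factorial : ℝ) * (∑ i, b i • Matrix.vecMulVec (u' i) (u' i)).det
      = ∑ f : Fin n → Fin m, (∏ k, b (f k)) * (Matrix.of fun k l => u' (f k) l).det ^ 2 := by
  classical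
  set D : ((Fin n → ℝ) [⋀^Fin n]→ₗ[ℝ] ℝ) := Matrix.detRowAlternating with hD
  set W : (Fin n → Fin m) → Matrix (Fin n) (Fin n) ℝ :=
    fun f => Matrix.of fun k l => u' (f k) l with hW
  have step1 : (∑ i, b i • Matrix.vecMulVec (u' i) (u' i)).det
      = ∑ f : Fin n → Fin m, (∏ k, b (f k) * u' (f k) k) * (W f).det := by
    have hM : (∑ i, b i • Matrix.vecMulVec (u' i) (u' i))
        = Matrix.of (fun k => ∑ i, (b i * u' i k) • (u' i)) := by
      ext k l
      simp [Matrix.vecMulVec, Matrix.sum_apply, mul_assoc]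
    rw [hM]
    have e1 : (Matrix.of (fun k => ∑ i, (b i * u' i k) • (u' i)) :
        Matrix (Fin n) (Fin n) ℝ).det
        = D.toMultilinearMap (fun k => ∑ i : Fin m, (b i * u' i k) • (u' i)) := rfl
    rw [e1, D.toMultilinearMap.map_sum]
    refine Finset.sum_congr rfl fun f _ => ?_
    rw [D.toMultilinearMap.map_smul_univ]
    rfl
  have step2 : ∀ σ : Perm (Fin n),
      (∑ f : Fin n → Fin m, (∏ k, b (f k) * u' (f k) k) * (W f).det)
      = ∑ f : Fin n → Fin m, (∏ k, b (f k)) *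
          ((((Perm.sign σ : ℤ) : ℝ) * ∏ k, u' (f (σ k)) k) * (W f).det) := by
    intro σ
    have hbij : Function.Bijective (fun f : Fin n → Fin m => f ∘ σ) := by
      constructor
      · intro f g h
        funext k
        have := congrFun h (σ.symm k)
        simpa using this
      · intro g
        exact ⟨g ∘ σ.symm, by funext k; simp⟩
    rw [← Fintype.sum_bijective _ hbij _ _ (fun f => rfl)]
    refine Finset.sum_congr rfl fun f _ => ?_
    have h1 : (∏ k, b ((f ∘ σ) k) * u' ((f ∘ σ) k) k)
        = (∏ k, b (f k)) * ∏ k, u' (f (σ k)) k := by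
      rw [Finset.prod_mul_distrib]
      congr 1
      exact Equiv.prod_comp σ (fun k => b (f k))
    have h2 : (W (f ∘ σ)).det = ((Perm.sign σ : ℤ) : ℝ) * (W f).det := by
      have : W (f ∘ σ) = (W f).submatrix σ id := rfl
      rw [this]
      exact_mod_cast Matrix.det_permute σ (W f)
    rw [h1, h2]
    ring
  have step3 : ∀ f : Fin n → Fin m,
      (∑ σ : Perm (Fin n), ((Perm.sign σ : ℤ) : ℝ) * ∏ k, u' (f (σ k)) k) = (W f).det := by
    intro f
    rw [Matrix.det_apply']
    rfl
  calc (n.factorial : ℝ) * (∑ i, b i • Matrix.vecMulVec (u' i) (u' i)).det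
      = ∑ _σ : Perm (Fin n), (∑ i, b i • Matrix.vecMulVec (u' i) (u' i)).det := by
        rw [Finset.sum_const, Finset.card_univ, Fintype.card_perm, Fintype.card_fin,
          nsmul_eq_mul]
    _ = ∑ σ : Perm (Fin n), ∑ f : Fin n → Fin m, (∏ k, b (f k)) *
          ((((Perm.sign σ : ℤ) : ℝ) * ∏ k, u' (f (σ k)) k) * (W f).det) := by
        refine Finset.sum_congr rfl fun σ _ => ?_
        rw [step1, step2 σ]
    _ = ∑ f : Fin n → Fin m, (∏ k, b (f k)) *
          ((∑ σ : Perm (Fin n), ((Perm.sign σ : ℤ) : ℝ) * ∏ k, u' (f (σ k)) k) * (W f).det) := by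
        simp only [Finset.mul_sum, Finset.sum_mul]
        rw [Finset.sum_comm]
    _ = ∑ f : Fin n → Fin m, (∏ k, b (f k)) * (W f).det ^ 2 := by
        refine Finset.sum_congr rfl fun f _ => ?_
        rw [step3 f, sq]

theorem my_det_ineq {n m : ℕ} (u' : Fin m → Fin n → ℝ) (c r : Fin m → ℝ)
    (hc : ∀ i, 0 < c i) (hr : ∀ i, 0 < r i)
    (hnorm : ∀ i, ∑ k, u' i k ^ 2 = 1)
    (hid' : ∑ i, c i • Matrix.vecMulVec (u' i) (u' i) = 1) :
    (∏ i, r i ^ (c i)) ≤ (∑ i, (c i * r i) • Matrix.vecMulVec (u' i) (u' i)).det := by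
  classical
  set q : (Fin n → Fin m) → ℝ := fun f => (Matrix.of fun k l => u' (f k) l).det ^ 2 with hq
  set P : (Fin n → Fin m) → ℝ :=
    fun f => (n.factorial : ℝ)⁻¹ * ((∏ k, c (f k)) * q f) with hP
  set N : (Fin n → Fin m) → Fin m → ℕ :=
    fun f i => (univ.filter (fun k => f k = i)).card with hN
  have hfac : (0:ℝ) < (n.factorial : ℝ) := by
    exact_mod_cast Nat.factorial_pos n
  have hq0 : ∀ f, 0 ≤ q f := fun f => sq_nonneg _
  have hP0 : ∀ f, 0 ≤ P f := by
    intro f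
    have h1 : (0:ℝ) ≤ ∏ k, c (f k) := Finset.prod_nonneg fun k _ => (hc (f k)).le
    positivity
  have hqinj : ∀ f, ¬ Function.Injective f → q f = 0 := by
    intro f hf
    rw [Function.not_injective_iff] at hf
    obtain ⟨k1, k2, hk, hne⟩ := hf
    have : (Matrix.of fun k l => u' (f k) l).det = 0 := by
      apply Matrix.det_zero_of_row_eq hne
      funext l
      simp [hk]
    simp [hq, this]
  have hsum : ∑ f, P f = 1 := by
    have h := my_cb u' c
    rw [hid', Matrix.det_one, mul_one] at h
    simp only [hP]
    rw [← Finset.mul_sum, ← h]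
    field_simp
  have hmarg : ∀ i, ∑ f, P f * (N f i : ℝ) = c i := by
    intro i
    set b : Fin m → ℝ := fun j => c j * (if j = i then 2 else 1) with hb
    have hMb : ∑ j, b j • Matrix.vecMulVec (u' j) (u' j)
        = 1 + c i • Matrix.vecMulVec (u' i) (u' i) := by
      have hsplit : ∀ j, b j • Matrix.vecMulVec (u' j) (u' j)
          = c j • Matrix.vecMulVec (u' j) (u' j)
            + (if j = i then c j • Matrix.vecMulVec (u' j) (u' j) else 0) := by
        intro j
        simp only [hb]
        split_ifs with h
        · rw [mul_comm (c j) 2, two_mul, add_smul]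
        · rw [mul_one, add_zero]
      rw [Finset.sum_congr rfl fun j _ => hsplit j, Finset.sum_add_distrib, hid',
        Finset.sum_ite_eq' univ i
          (fun j => c j • Matrix.vecMulVec (u' j) (u' j))]
      simp
    have hnorm' : u' i ⬝ᵥ c i • u' i = c i := by
      have h2 : ∑ k, u' i k * u' i k = 1 := by
        rw [← hnorm i]
        exact Finset.sum_congr rfl fun k _ => (sq (u' i k)).symm
      calc u' i ⬝ᵥ c i • u' i = ∑ k, u' i k * (c i * u' i k) := rfl
        _ = c i * ∑ k, u' i k * u' i k := by
            rw [Finset.mul_sum]; exact Finset.sum_congr rfl fun k _ => by ring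
        _ = c i := by rw [h2, mul_one]
    have hdetb : (∑ j, b j • Matrix.vecMulVec (u' j) (u' j)).det = 1 + c i := by
      rw [hMb]
      have h1 : c i • Matrix.vecMulVec (u' i) (u' i)
          = Matrix.vecMulVec (c i • (u' i)) (u' i) := by
        ext k l
        simp [Matrix.vecMulVec, mul_assoc]
      rw [h1, Matrix.vecMulVec_eq Unit, Matrix.det_one_add_replicateCol_mul_replicateRow, hnorm']
    have hcb := my_cb u' b
    rw [hdetb] at hcb
    -- rewrite RHS of hcb
    have hterm : ∀ f : Fin n → Fin m, (∏ k, b (f k)) * q f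
        = (n.factorial : ℝ) * (P f * (1 + (N f i : ℝ))) := by
      intro f
      have hsplitprod : (∏ k, b (f k))
          = (∏ k, c (f k)) * ∏ k, (if f k = i then (2:ℝ) else 1) := by
        rw [← Finset.prod_mul_distrib]
      by_cases hinj : Function.Injective f
      · have hcard : N f i ≤ 1 := by
          rw [hN]
          refine Finset.card_le_one.mpr fun a ha b2 hb2 => ?_
          simp only [Finset.mem_filter] at ha hb2
          exact hinj (ha.2.trans hb2.2.symm)
        have hpow : (∏ k, (if f k = i then (2:ℝ) else 1)) = 1 + (N f i : ℝ) := by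
          rw [Finset.prod_ite, Finset.prod_const, Finset.prod_const, one_pow, mul_one]
          have hNN : #(Finset.filter (fun k => f k = i) Finset.univ) = N f i := rfl
          rw [hNN]
          rcases Nat.le_one_iff_eq_zero_or_eq_one.mp hcard with h0 | h0 <;>
            rw [h0] <;> norm_num
        rw [hsplitprod, hpow]
        have hPf : P f = (n.factorial : ℝ)⁻¹ * ((∏ k, c (f k)) * q f) := rfl
        rw [hPf]
        field_simp
      · have hPf : P f = 0 := by
          show (n.factorial : ℝ)⁻¹ * ((∏ k, c (f k)) * q f) = 0
          rw [hqinj f hinj]; ring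
        rw [hqinj f hinj, hPf]
        ring
    rw [Finset.sum_congr rfl fun f _ => hterm f, ← Finset.mul_sum] at hcb
    have hcb' : ∑ f, P f * (1 + (N f i : ℝ)) = 1 + c i := by
      have := mul_left_cancel₀ (ne_of_gt hfac) hcb
      linarith [this]
    have : ∑ f, (P f + P f * (N f i : ℝ)) = 1 + c i := by
      rw [← hcb']
      exact Finset.sum_congr rfl fun f _ => by ring
    rw [Finset.sum_add_distrib, hsum] at this
    linarith
  -- AM-GM
  have hz0 : ∀ f : Fin n → Fin m, (0:ℝ) ≤ ∏ k, r (f k) :=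
    fun f => Finset.prod_nonneg fun k _ => (hr (f k)).le
  have hgm := Real.geom_mean_le_arith_mean_weighted univ P (fun f => ∏ k, r (f k))
    (fun f _ => hP0 f) hsum (fun f _ => hz0 f)
  have hrhs : ∑ f, P f * ∏ k, r (f k)
      = (∑ i, (c i * r i) • Matrix.vecMulVec (u' i) (u' i)).det := by
    have h := my_cb u' (fun i => c i * r i)
    have hterm : ∀ f : Fin n → Fin m, (∏ k, c (f k) * r (f k)) * q f
        = (n.factorial : ℝ) * (P f * ∏ k, r (f k)) := by
      intro f
      rw [Finset.prod_mul_distrib, hP]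
      field_simp
    rw [Finset.sum_congr rfl fun f _ => hterm f, ← Finset.mul_sum] at h
    exact (mul_left_cancel₀ (ne_of_gt hfac) h).symm
  have hfiber : ∀ f : Fin n → Fin m, (∏ k, r (f k)) = ∏ i, r i ^ (N f i) := by
    intro f
    rw [← Finset.prod_fiberwise_of_maps_to (fun k _ => Finset.mem_univ (f k)) (fun k => r (f k))]
    refine Finset.prod_congr rfl fun i _ => ?_
    have hcongr : ∀ k ∈ Finset.univ.filter (fun k => f k = i), r (f k) = r i :=
      fun k hk => by rw [(Finset.mem_filter.mp hk).2]
    rw [Finset.prod_congr rfl hcongr, Finset.prod_const]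
  have hlhs : (∏ i, r i ^ (c i)) = ∏ f, (∏ k, r (f k)) ^ (P f) := by
    calc (∏ i, r i ^ (c i)) = ∏ i, r i ^ (∑ f : Fin n → Fin m, P f * (N f i : ℝ)) := by
          exact Finset.prod_congr rfl fun i _ => by rw [hmarg i]
      _ = ∏ i, ∏ f : Fin n → Fin m, r i ^ (P f * (N f i : ℝ)) := by
          exact Finset.prod_congr rfl fun i _ => my_rpow_sum univ (hr i) _
      _ = ∏ f : Fin n → Fin m, ∏ i, r i ^ (P f * (N f i : ℝ)) := Finset.prod_comm
      _ = ∏ f : Fin n → Fin m, (∏ k, r (f k)) ^ (P f) := by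
          refine Finset.prod_congr rfl fun f _ => ?_
          rw [hfiber f]
          rw [← Real.finset_prod_rpow univ (fun i => r i ^ (N f i))
            (fun i _ => pow_nonneg (hr i).le _) (P f)]
          refine Finset.prod_congr rfl fun i _ => ?_
          rw [← Real.rpow_natCast (r i) (N f i), ← Real.rpow_mul (hr i).le]
          congr 1
          ring
  rw [hlhs, ← hrhs]
  simpa using hgm

/-- Lemma 4: if `(u i)` are unit vectors in `ℝⁿ`, `(c i)` positive reals with
`∑ i, c i • (u i ⊗ u i) = I`, and `(α i)` positive reals, then the zonotope
`Z = ∑ i, α i • [-u i, u i]` has volume at least `2 ^ n * ∏ (α i / c i) ^ (c i)`. -/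
theorem stmt_4 (n m : ℕ) (u : Fin m → EuclideanSpace ℝ (Fin n)) (c α : Fin m → ℝ)
    (hu : ∀ i, ‖u i‖ = 1) (hc : ∀ i, 0 < c i)
    (hid : ∀ x : EuclideanSpace ℝ (Fin n), ∑ i, c i • ⟪u i, x⟫ • u i = x)
    (hα : ∀ i, 0 < α i)
    (Z : Set (EuclideanSpace ℝ (Fin n)))
    (hZ : Z = {x : EuclideanSpace ℝ (Fin n) | ∃ lam : Fin m → ℝ,
      (∀ i, |lam i| ≤ 1) ∧ x = ∑ i, (α i * lam i) • u i}) :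
    ENNReal.ofReal (2 ^ n * ∏ i, (α i / c i) ^ (c i)) ≤ volume Z := by
  classical
  set u' : Fin m → Fin n → ℝ := fun i k => u i k with hu'
  -- basic facts
  have hnorm : ∀ i, ∑ k, u' i k ^ 2 = 1 := by
    intro i
    have h := hu i
    rw [EuclideanSpace.norm_eq] at h
    have h2 : ∑ k, u i k ^ 2 = 1 := by
      have := congrArg (fun t : ℝ => t ^ 2) h
      simp only [one_pow] at this
      rw [← this, Real.sq_sqrt (by positivity)]
      refine Finset.sum_congr rfl fun k _ => ?_
      rw [Real.norm_eq_abs, sq_abs]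
    exact h2
  have hid' : ∑ i, c i • Matrix.vecMulVec (u' i) (u' i) = 1 := by
    ext k l
    have h := congrArg (fun v : EuclideanSpace ℝ (Fin n) => v l) (hid (EuclideanSpace.single k 1))
    simp only at h
    have hL : (∑ i, c i • ⟪u i, EuclideanSpace.single k (1:ℝ)⟫ • u i) l
        = ∑ i, c i * (u i k * u i l) := by
      rw [WithLp.ofLp_sum, Finset.sum_apply]
      refine Finset.sum_congr rfl fun i _ => ?_
      have hin : ⟪u i, EuclideanSpace.single k (1:ℝ)⟫ = u i k := by
        rw [EuclideanSpace.inner_single_right]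
        simp
      rw [hin]
      show c i * (u i k * u i l) = c i * (u i k * u i l)
      rfl
    rw [hL] at h
    have hR : (EuclideanSpace.single k (1:ℝ)) l = if k = l then 1 else 0 := by
      rw [EuclideanSpace.single_apply]
      simp [eq_comm]
    rw [hR] at h
    simp only [Matrix.sum_apply, Matrix.smul_apply, Matrix.vecMulVec_apply, smul_eq_mul,
      Matrix.one_apply]
    exact h
  have htrace : ∑ i, c i = (n : ℝ) := by
    have h := congrArg Matrix.trace hid'
    rw [Matrix.trace_sum, Matrix.trace_one] at h
    have h2 : ∀ i, (c i • Matrix.vecMulVec (u' i) (u' i)).trace = c i := by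
      intro i
      rw [Matrix.trace_smul]
      have : (Matrix.vecMulVec (u' i) (u' i)).trace = ∑ k, u' i k ^ 2 := by
        rw [Matrix.trace]
        refine Finset.sum_congr rfl fun k _ => ?_
        simp [Matrix.vecMulVec_apply, Matrix.diag, sq]
      rw [this, hnorm i, smul_eq_mul, mul_one]
    rw [Finset.sum_congr rfl fun i _ => h2 i] at h
    simpa using h
  have hnormsum : ∀ y : EuclideanSpace ℝ (Fin n), ∑ i, c i * ⟪u i, y⟫ ^ 2 = ‖y‖ ^ 2 := by
    intro y
    have h := congrArg (fun v : EuclideanSpace ℝ (Fin n) => ⟪v, y⟫) (hid y)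
    rw [sum_inner] at h
    have hL : ∀ i, ⟪c i • ⟪u i, y⟫ • u i, y⟫ = c i * ⟪u i, y⟫ ^ 2 := by
      intro i
      rw [real_inner_smul_left, real_inner_smul_left]
      ring
    rw [Finset.sum_congr rfl fun i _ => hL i] at h
    rw [h, real_inner_self_eq_norm_sq]
  -- the transport function
  set cst : ℝ := Real.sqrt (2 * Real.pi) / 2 with hcst
  have hcstpos : 0 < cst := by
    rw [hcst]
    have := Real.pi_pos
    positivity
  set g : ℝ → ℝ := fun t => Real.exp (-(1/2) * t ^ 2) with hg
  have hgcont : Continuous g := by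
    rw [hg]; fun_prop
  have hgpos : ∀ t, 0 < g t := fun t => Real.exp_pos _
  set G : ℝ → ℝ := fun x => ∫ t in (0:ℝ)..x, g t with hG
  have hGderiv : ∀ x, HasDerivAt G (g x) x := by
    intro x
    exact intervalIntegral.integral_hasDerivAt_right ((hgcont.intervalIntegrable 0 x))
      hgcont.aestronglyMeasurable.stronglyMeasurableAtFilter hgcont.continuousAt
  have hGmono : StrictMono G := by
    apply strictMono_of_deriv_pos
    intro x
    rw [(hGderiv x).deriv]
    exact hgpos x
  have hgint : Integrable g := by
    rw [hg]
    exact integrable_exp_neg_mul_sq (by norm_num)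
  have hIoi : ∫ t in Set.Ioi (0:ℝ), g t = cst := by
    rw [hg, hcst]
    have := integral_gaussian_Ioi (1/2)
    rw [show Real.pi / (1/2) = 2 * Real.pi by ring] at this
    convert this using 2
  have hGnonneg : ∀ x, 0 ≤ x → 0 ≤ G x := by
    intro x hx
    rw [hG]
    exact intervalIntegral.integral_nonneg hx (fun t _ => (hgpos t).le)
  have hGlt : ∀ x, 0 ≤ x → G x < cst := by
    intro x hx
    have hsplit : (∫ t in Set.Ioi (0:ℝ), g t)
        = (∫ t in Set.Ioc (0:ℝ) x, g t) + ∫ t in Set.Ioi x, g t := by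
      rw [← MeasureTheory.setIntegral_union (Set.Ioc_disjoint_Ioi le_rfl)
        measurableSet_Ioi hgint.integrableOn hgint.integrableOn,
        Set.Ioc_union_Ioi_eq_Ioi hx]
    have hpos : 0 < ∫ t in Set.Ioi x, g t := by
      rw [MeasureTheory.setIntegral_pos_iff_support_of_nonneg_ae
        (Filter.Eventually.of_forall (fun t => (hgpos t).le)) hgint.integrableOn]
      have : Function.support g = Set.univ := by
        ext t; simp [Function.support, (hgpos t).ne']
      rw [this, Set.univ_inter, Real.volume_Ioi]
      exact ENNReal.zero_lt_top
    have hGx : G x = ∫ t in Set.Ioc (0:ℝ) x, g t := by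
      rw [hG]
      exact intervalIntegral.integral_of_le hx
    rw [hGx, ← hIoi, hsplit]
    linarith
  have hGodd : ∀ x, G (-x) = - G x := by
    intro x
    have h1 : (∫ t in (0:ℝ)..x, g (-t)) = ∫ t in (-x)..(0:ℝ), g t := by
      have := intervalIntegral.integral_comp_neg (a := (0:ℝ)) (b := x) (f := g)
      simpa using this
    have h2 : (∫ t in (0:ℝ)..x, g (-t)) = G x := by
      refine intervalIntegral.integral_congr fun t _ => ?_
      rw [hg]
      simp [neg_sq]
    rw [h2] at h1
    rw [hG]
    have h3 : (∫ t in (-x)..(0:ℝ), g t) = - ∫ t in (0:ℝ)..(-x), g t :=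
      (intervalIntegral.integral_symm _ _)
    rw [h3] at h1
    linarith
  have hGabs : ∀ x, |G x| < cst := by
    intro x
    rcases le_total 0 x with hx | hx
    · rw [abs_of_nonneg (hGnonneg x hx)]
      exact hGlt x hx
    · have h1 : G x = - G (-x) := by linarith [hGodd x]
      rw [h1, abs_neg, abs_of_nonneg (hGnonneg (-x) (by linarith))]
      exact hGlt (-x) (by linarith)
  -- transport map
  set Ψ : EuclideanSpace ℝ (Fin n) → EuclideanSpace ℝ (Fin n) :=
    fun y => ∑ i, ((α i / cst) * G ⟪u i, y⟫) • u i with hΨ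
  set Ψ' : EuclideanSpace ℝ (Fin n) → (EuclideanSpace ℝ (Fin n) →L[ℝ] EuclideanSpace ℝ (Fin n)) :=
    fun y => ∑ i, ((α i / cst) * g ⟪u i, y⟫) • ((innerSL ℝ (u i)).smulRight (u i)) with hΨ'
  have hasfd : ∀ y, HasFDerivAt Ψ (Ψ' y) y := by
    intro y
    rw [hΨ, hΨ']
    refine HasFDerivAt.fun_sum fun i _ => ?_
    have h1 : HasFDerivAt (fun y : EuclideanSpace ℝ (Fin n) => ⟪u i, y⟫)
        (innerSL ℝ (u i)) y := (innerSL ℝ (u i)).hasFDerivAt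
    have h2 : HasDerivAt G (g ⟪u i, y⟫) ⟪u i, y⟫ := hGderiv _
    have h3 := h2.comp_hasFDerivAt y h1
    have h4 := h3.const_mul (α i / cst)
    have h5 := h4.smul_const (u i)
    convert h5 using 1
    ext v
    simp [ContinuousLinearMap.smulRight_apply, smul_smul, mul_comm, mul_assoc, mul_left_comm]
    ext v
    simp [ContinuousLinearMap.smulRight_apply, smul_smul, mul_comm, mul_assoc, mul_left_comm]
  have himg : ∀ y, Ψ y ∈ Z := by
    intro y
    rw [hZ]
    refine ⟨fun i => G ⟪u i, y⟫ / cst, fun i => ?_, ?_⟩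
    · rw [abs_div, abs_of_pos hcstpos, div_le_one hcstpos]
      exact (hGabs _).le
    · rw [hΨ]
      refine Finset.sum_congr rfl fun i _ => ?_
      congr 1
      field_simp
  have hinj : Function.Injective Ψ := by
    intro y1 y2 hΨeq
    have key : ∀ s t : ℝ, (G s - G t) * (s - t) = 0 → s = t := by
      intro s t h
      by_contra hne
      rcases lt_or_gt_of_ne hne with hlt | hlt
      · have h1 : G s < G t := hGmono hlt
        nlinarith
      · have h1 : G t < G s := hGmono hlt
        nlinarith
    have hzero : ∑ i, (α i / cst) * ((G ⟪u i, y1⟫ - G ⟪u i, y2⟫) * (⟪u i, y1⟫ - ⟪u i, y2⟫)) = 0 := by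
      have hsub : (Ψ y1) - (Ψ y2) = 0 := by rw [hΨeq]; simp
      have hinner : ⟪Ψ y1 - Ψ y2, y1 - y2⟫ = 0 := by rw [hsub]; simp
      have hexp : ⟪Ψ y1 - Ψ y2, y1 - y2⟫
          = ∑ i, (α i / cst) * ((G ⟪u i, y1⟫ - G ⟪u i, y2⟫) * (⟪u i, y1⟫ - ⟪u i, y2⟫)) := by
        rw [hΨ]
        rw [← Finset.sum_sub_distrib, sum_inner]
        refine Finset.sum_congr rfl fun i _ => ?_
        rw [← sub_smul, real_inner_smul_left, inner_sub_right]
        ring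
      rw [← hexp, hinner]
    have hterm0 : ∀ i ∈ Finset.univ,
        (α i / cst) * ((G ⟪u i, y1⟫ - G ⟪u i, y2⟫) * (⟪u i, y1⟫ - ⟪u i, y2⟫)) = 0 := by
      refine (Finset.sum_eq_zero_iff_of_nonneg fun i _ => ?_).mp hzero
      have hmul : 0 ≤ (G ⟪u i, y1⟫ - G ⟪u i, y2⟫) * (⟪u i, y1⟫ - ⟪u i, y2⟫) := by
        rcases le_total ⟪u i, y2⟫ ⟪u i, y1⟫ with hle | hle
        · exact mul_nonneg (by linarith [hGmono.monotone hle]) (by linarith)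
        · nlinarith [hGmono.monotone hle]
      have hac : 0 < α i / cst := div_pos (hα i) hcstpos
      positivity
    have hain : ∀ i, ⟪u i, y1⟫ = ⟪u i, y2⟫ := by
      intro i
      have h := hterm0 i (Finset.mem_univ i)
      have hac : α i / cst ≠ 0 := (div_pos (hα i) hcstpos).ne'
      have := mul_eq_zero.mp h
      rcases this with h' | h'
      · exact absurd h' hac
      · exact key _ _ h'
    calc y1 = ∑ i, c i • ⟪u i, y1⟫ • u i := (hid y1).symm
      _ = ∑ i, c i • ⟪u i, y2⟫ • u i := by
          refine Finset.sum_congr rfl fun i _ => ?_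
          rw [hain i]
      _ = y2 := hid y2
  -- determinant lower bound
  set B := (EuclideanSpace.basisFun (Fin n) ℝ).toBasis with hB
  set r : Fin m → (EuclideanSpace ℝ (Fin n)) → ℝ :=
    fun i y => ((α i / c i) / cst) * g ⟪u i, y⟫ with hr
  have hrpos : ∀ i y, 0 < r i y := by
    intro i y
    rw [hr]
    have := hgpos ⟪u i, y⟫
    have := hα i
    have := hc i
    positivity
  have hmat : ∀ y, LinearMap.toMatrix B B (Ψ' y : EuclideanSpace ℝ (Fin n) →ₗ[ℝ] EuclideanSpace ℝ (Fin n))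
      = ∑ i, (c i * r i y) • Matrix.vecMulVec (u' i) (u' i) := by
    intro y
    ext k l
    rw [LinearMap.toMatrix_apply]
    have hBl : B l = EuclideanSpace.single l 1 := by
      rw [hB, OrthonormalBasis.coe_toBasis, EuclideanSpace.basisFun_apply]
    have happ : (Ψ' y) (B l) = ∑ i, ((α i / cst) * g ⟪u i, y⟫ * (u i l)) • u i := by
      rw [hΨ', hBl]
      rw [ContinuousLinearMap.sum_apply]
      refine Finset.sum_congr rfl fun i _ => ?_
      rw [ContinuousLinearMap.smul_apply, ContinuousLinearMap.smulRight_apply]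
      have hin : (innerSL ℝ (u i)) (EuclideanSpace.single l (1:ℝ)) = u i l := by
        rw [innerSL_apply_apply, EuclideanSpace.inner_single_right]
        simp
      rw [hin, smul_smul]
    have hrepr : B.repr ((Ψ' y) (B l)) k = ((Ψ' y) (B l) : EuclideanSpace ℝ (Fin n)) k := by
      rw [hB, OrthonormalBasis.coe_toBasis_repr_apply, EuclideanSpace.basisFun_repr]
    rw [show ((Ψ' y).toLinearMap) (B l) = (Ψ' y) (B l) from rfl] at *
    rw [hrepr, happ]
    have hsum : ((∑ i, ((α i / cst) * g ⟪u i, y⟫ * (u i l)) • u i : EuclideanSpace ℝ (Fin n))) k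
        = ∑ i, (α i / cst) * g ⟪u i, y⟫ * (u i l) * (u i k) := by
      rw [WithLp.ofLp_sum, Finset.sum_apply]
      rfl
    rw [hsum]
    rw [Matrix.sum_apply]
    refine Finset.sum_congr rfl fun i _ => ?_
    rw [Matrix.smul_apply, Matrix.vecMulVec_apply, smul_eq_mul]
    have hd : c i * r i y = (α i / cst) * g ⟪u i, y⟫ := by
      rw [hr, ← mul_assoc]
      congr 1
      rw [div_div, mul_div_assoc', mul_div_mul_left _ _ (hc i).ne']
    rw [hd]
    show (α i / cst) * g ⟪u i, y⟫ * (u i l) * (u i k)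
      = (α i / cst) * g ⟪u i, y⟫ * ((u i k) * (u i l))
    ring
  have hdet : ∀ y, (∏ i, ((α i / c i) / cst) ^ (c i)) * Real.exp (-(1/2) * ‖y‖ ^ 2)
      ≤ (Ψ' y).det := by
    intro y
    have h1 : (Ψ' y).det
        = (∑ i, (c i * r i y) • Matrix.vecMulVec (u' i) (u' i)).det := by
      rw [ContinuousLinearMap.det, ← LinearMap.det_toMatrix B, hmat y]
    rw [h1]
    refine le_trans (le_of_eq ?_) (my_det_ineq u' c (fun i => r i y) hc (fun i => hrpos i y) hnorm hid')
    -- ∏ (t/cst)^c * exp = ∏ (r i y)^c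
    have hsplit : ∀ i, (r i y) ^ (c i)
        = ((α i / c i) / cst) ^ (c i) * Real.exp (-(1/2) * ⟪u i, y⟫ ^ 2 * c i) := by
      intro i
      rw [hr, hg]
      rw [Real.mul_rpow (div_nonneg (div_nonneg (hα i).le (hc i).le) hcstpos.le)
        (Real.exp_nonneg _)]
      congr 1
      rw [← Real.exp_mul]
    rw [Finset.prod_congr rfl fun i _ => hsplit i, Finset.prod_mul_distrib]
    congr 1
    rw [← Real.exp_sum]
    congr 1
    rw [← hnormsum y]
    rw [Finset.mul_sum]
    refine Finset.sum_congr rfl fun i _ => by ring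
  -- gaussian integral facts
  have hEfinrank : Module.finrank ℝ (EuclideanSpace ℝ (Fin n)) = n := finrank_euclideanSpace_fin
  have hgaussval : ∫ v : EuclideanSpace ℝ (Fin n), Real.exp (-(1/2) * ‖v‖^2)
      = (2*Real.pi) ^ ((n:ℝ)/2) := by
    have h := GaussianFourier.integral_rexp_neg_mul_sq_norm (V := EuclideanSpace ℝ (Fin n))
      (b := (1/2:ℝ)) (by norm_num)
    rw [hEfinrank] at h
    rw [show Real.pi / (1/2:ℝ) = 2*Real.pi by ring] at h
    exact h
  have hgaussint : Integrable (fun v : EuclideanSpace ℝ (Fin n) =>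
      Real.exp (-(1/2) * ‖v‖^2)) volume := by
    have h := (GaussianFourier.integrable_cexp_neg_mul_sq_norm_add (V := EuclideanSpace ℝ (Fin n))
      (b := ((1/2:ℝ):ℂ)) (by norm_num) 0 0).re
    refine h.congr (Filter.Eventually.of_forall fun v => ?_)
    have hz : (-((1/2:ℝ):ℂ) * (‖v‖:ℂ)^2 + (0:ℂ) * ((⟪(0 : EuclideanSpace ℝ (Fin n)), v⟫ : ℝ):ℂ))
        = (((-(1/2) * ‖v‖^2 : ℝ)):ℂ) := by
      push_cast
      ring
    rw [show (fun x => RCLike.re (Complex.exp (-((1/2:ℝ):ℂ) * (‖x‖:ℂ)^2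
        + (0:ℂ) * ((⟪(0 : EuclideanSpace ℝ (Fin n)), x⟫ : ℝ):ℂ)))) v
        = RCLike.re (Complex.exp ((((-(1/2) * ‖v‖^2 : ℝ)):ℂ))) from by rw [← hz]]
    rw [← Complex.ofReal_exp]
    rfl
  set K := ∏ i, ((α i / c i) / cst) ^ (c i) with hK
  have hKpos : 0 < K := by
    rw [hK]
    exact Finset.prod_pos fun i _ =>
      Real.rpow_pos_of_pos (div_pos (div_pos (hα i) (hc i)) hcstpos) _
  have harith : K * (2*Real.pi) ^ ((n:ℝ)/2) = 2 ^ n * ∏ i, (α i / c i) ^ (c i) := by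
    have h1 : ∀ i : Fin m, ((α i / c i)/cst) ^ (c i)
        = (α i / c i) ^ (c i) * (cst ^ (c i))⁻¹ := by
      intro i
      rw [Real.div_rpow (div_nonneg (hα i).le (hc i).le) hcstpos.le, div_eq_mul_inv]
    have h2 : ∏ i, (cst ^ (c i))⁻¹ = (cst ^ (n:ℕ) : ℝ)⁻¹ := by
      rw [Finset.prod_inv_distrib]
      rw [← my_rpow_sum Finset.univ hcstpos c, htrace, Real.rpow_natCast]
    have h3 : (2*Real.pi) ^ ((n:ℝ)/2) = (2*cst) ^ (n:ℕ) := by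
      have h2cst : 2 * cst = Real.sqrt (2*Real.pi) := by rw [hcst]; ring
      rw [h2cst, show ((n:ℝ)/2) = (1/2) * (n:ℝ) by ring,
        Real.rpow_mul (by positivity), Real.rpow_natCast]
      congr 1
      rw [Real.sqrt_eq_rpow]
    rw [hK, Finset.prod_congr rfl fun i _ => h1 i, Finset.prod_mul_distrib, h2, h3, mul_pow]
    have hcstn : (cst ^ (n:ℕ) : ℝ) ≠ 0 := pow_ne_zero _ hcstpos.ne'
    field_simp
  have key := lintegral_abs_det_fderiv_eq_addHaar_image volume MeasurableSet.univ
    (fun x _ => (hasfd x).hasFDerivWithinAt) (hinj.injOn)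
  calc ENNReal.ofReal (2 ^ n * ∏ i, (α i / c i) ^ (c i))
      = ENNReal.ofReal (∫ y : EuclideanSpace ℝ (Fin n), K * Real.exp (-(1/2) * ‖y‖^2)) := by
        rw [MeasureTheory.integral_const_mul, hgaussval, harith]
    _ = ∫⁻ y, ENNReal.ofReal (K * Real.exp (-(1/2) * ‖y‖^2)) :=
        MeasureTheory.ofReal_integral_eq_lintegral_ofReal (hgaussint.const_mul K)
          (Filter.Eventually.of_forall fun y =>
            mul_nonneg hKpos.le (Real.exp_nonneg _))
    _ ≤ ∫⁻ y, ENNReal.ofReal |(Ψ' y).det| := lintegral_mono fun y =>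
        ENNReal.ofReal_le_ofReal ((hdet y).trans (le_abs_self _))
    _ = volume (Ψ '' Set.univ) := by simpa using key
    _ ≤ volume Z := measure_mono (by rintro x ⟨y, -, rfl⟩; exact himg y)
end

section
/- (Loomis–Whitney) Let C be a convex body in R^n and e_1,...,e_n the standard orthonormal basis, with P_i the orthogonal projection onto e_i^⊥. Then |C|^{n−1} ≤ Π_{i=1}^n |P_i C|. -/
open MeasureTheory
open scoped RealInnerProductSpace BigOperators ENNReal NNReal

section LWaux

open Finset Function

variable {ι : Type*} [Fintype ι] [DecidableEq ι]

/-- The marginal form of the Loomis–Whitney/Finner Hölder inequality. -/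
private lemma lw_marginal {p : ℝ} (hp0 : 0 ≤ p)
    {f : ι → (ι → ℝ) → ℝ≥0∞} (hf : ∀ i, Measurable (f i))
    (hind : ∀ i x t, f i (Function.update x i t) = f i x)
    (hp1 : ((Fintype.card ι - 1 : ℕ) : ℝ) * p = 1)
    (s : Finset ι) (x : ι → ℝ) :
    (∫⋯∫⁻_s, fun y => ∏ i, f i y ^ p) x
      ≤ ∏ i, ((∫⋯∫⁻_(s.erase i), f i) x) ^ p := by
  have hF : Measurable fun y => ∏ i, f i y ^ p :=
    Finset.measurable_prod _ fun i _ => (hf i).pow_const p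
  have key : ∀ (i : ι) (s : Finset ι), i ∉ s → ∀ (x : ι → ℝ) (t : ℝ),
      (∫⋯∫⁻_s, f i) (update x i t) = (∫⋯∫⁻_s, f i) x := by
    intro i s hi x t
    rw [lmarginal_update_of_notMem (hf i) hi]
    congr 1
    ext y
    exact hind i y t
  induction s using Finset.induction generalizing x with
  | empty =>
    simp only [lmarginal_empty, Finset.erase_empty]
    exact le_rfl
  | @insert j s hj ih =>
    calc (∫⋯∫⁻_insert j s, fun y => ∏ i, f i y ^ p) x
        = ∫⁻ t, (∫⋯∫⁻_s, fun y => ∏ i, f i y ^ p) (update x j t) :=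
          lmarginal_insert _ hF hj x
      _ ≤ ∫⁻ t, ∏ i, ((∫⋯∫⁻_(s.erase i), f i) (update x j t)) ^ p :=
          lintegral_mono fun t => ih (update x j t)
      _ = ∫⁻ t, ((∫⋯∫⁻_s, f j) x) ^ p *
            ∏ i ∈ univ.erase j, ((∫⋯∫⁻_(s.erase i), f i) (update x j t)) ^ p := by
          congr 1; funext t
          rw [← Finset.mul_prod_erase univ _ (mem_univ j), Finset.erase_eq_of_notMem hj,
            key j s hj x t]
      _ = ((∫⋯∫⁻_s, f j) x) ^ p *
            ∫⁻ t, ∏ i ∈ univ.erase j, ((∫⋯∫⁻_(s.erase i), f i) (update x j t)) ^ p := by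
          apply lintegral_const_mul
          exact Finset.measurable_prod _ fun i _ =>
            (((hf i).lmarginal _).comp (measurable_update x)).pow_const p
      _ ≤ ((∫⋯∫⁻_s, f j) x) ^ p *
            ∏ i ∈ univ.erase j, (∫⁻ t, (∫⋯∫⁻_(s.erase i), f i) (update x j t)) ^ p := by
          gcongr
          refine ENNReal.lintegral_prod_norm_pow_le _ (fun i _ => ?_) ?_ (fun i _ => hp0)
          · exact (((hf i).lmarginal _).comp (measurable_update x)).aemeasurable
          · rw [Finset.sum_const, card_erase_of_mem (mem_univ j), card_univ, nsmul_eq_mul]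
            exact hp1
      _ = ∏ i, ((∫⋯∫⁻_((insert j s).erase i), f i) x) ^ p := by
          rw [← Finset.mul_prod_erase univ
            (fun i => ((∫⋯∫⁻_((insert j s).erase i), f i) x) ^ p) (mem_univ j),
            Finset.erase_insert hj]
          congr 1
          refine Finset.prod_congr rfl fun i hi => ?_
          have hij : i ≠ j := (Finset.mem_erase.mp hi).1
          have hj' : j ∉ s.erase i := fun h => hj (Finset.mem_of_mem_erase h)
          rw [Finset.erase_insert_of_ne hij.symm, lmarginal_insert _ (hf i) hj']

/-- Loomis–Whitney for Lebesgue measure on `ι → ℝ`, with exponents `(card ι - 1)⁻¹`. -/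
private lemma lw_pi (h2 : 2 ≤ Fintype.card ι) {K : Set (ι → ℝ)} (hK : IsCompact K) :
    volume K ≤ ∏ i : ι,
      (volume ((fun (x : ι → ℝ) (j : ↥(univ.erase i)) => x (j : ι)) '' K))
        ^ (((Fintype.card ι : ℝ) - 1)⁻¹) := by
  classical
  set p : ℝ := ((Fintype.card ι : ℝ) - 1)⁻¹ with hp_def
  have hcard : (1 : ℝ) ≤ (Fintype.card ι : ℝ) - 1 := by
    have : (2 : ℝ) ≤ (Fintype.card ι : ℝ) := by exact_mod_cast h2
    linarith
  have hp0 : 0 ≤ p := by positivity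
  have hp1 : ((Fintype.card ι - 1 : ℕ) : ℝ) * p = 1 := by
    have h1 : ((Fintype.card ι - 1 : ℕ) : ℝ) = (Fintype.card ι : ℝ) - 1 := by
      have : 1 ≤ Fintype.card ι := le_trans one_le_two h2
      push_cast [Nat.cast_sub this]
      ring
    rw [h1, hp_def, mul_inv_cancel₀ (by linarith)]
  -- the projections
  set π : ∀ i : ι, (ι → ℝ) → (↥(univ.erase i) → ℝ) :=
    fun i x j => x (j : ι) with hπ_def
  have hπc : ∀ i, Continuous (π i) := fun i =>
    continuous_pi fun j => continuous_apply _
  have hS : ∀ i, MeasurableSet (π i '' K) := fun i =>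
    ((hK.image (hπc i)).isClosed).measurableSet
  set f : ι → (ι → ℝ) → ℝ≥0∞ :=
    fun i x => Set.indicator (π i '' K) 1 (π i x) with hf_def
  have hf : ∀ i, Measurable (f i) := fun i =>
    (measurable_const.indicator (hS i)).comp (hπc i).measurable
  have hind : ∀ (i : ι) (x : ι → ℝ) (t : ℝ), f i (Function.update x i t) = f i x := by
    intro i x t
    have : π i (Function.update x i t) = π i x := by
      funext j
      have hj : (j : ι) ≠ i := (Finset.mem_erase.mp j.2).1
      simp [hπ_def, Function.update_of_ne hj]
    simp only [hf_def, this]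
  have hpt : ∀ y, Set.indicator K 1 y ≤ ∏ i, f i y ^ p := by
    intro y
    by_cases hy : y ∈ K
    · have : ∀ i, f i y = 1 := by
        intro i
        simp [hf_def, Set.indicator_of_mem (Set.mem_image_of_mem _ hy)]
      rw [Set.indicator_of_mem hy]
      simp [this, ENNReal.one_rpow]
    · rw [Set.indicator_of_notMem hy]
      exact zero_le
  have x₀ : ι → ℝ := fun _ => 0
  calc volume K = ∫⁻ y, Set.indicator K 1 y :=
        (lintegral_indicator_one hK.measurableSet).symm
    _ ≤ ∫⁻ y, ∏ i, f i y ^ p := lintegral_mono hpt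
    _ = (∫⋯∫⁻_univ, fun y => ∏ i, f i y ^ p) x₀ := by
        rw [volume_pi]
        exact lintegral_eq_lmarginal_univ x₀
    _ ≤ ∏ i, ((∫⋯∫⁻_(univ.erase i), f i) x₀) ^ p :=
        lw_marginal hp0 hf hind hp1 univ x₀
    _ = ∏ i, (volume (π i '' K)) ^ p := by
        refine Finset.prod_congr rfl fun i _ => ?_
        congr 1
        have hup : ∀ y : (∀ _j : ↥(univ.erase i), ℝ),
            π i (updateFinset x₀ (univ.erase i) y) = y := by
          intro y
          funext j
          simp [hπ_def, updateFinset, j.2]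
        simp only [lmarginal, hf_def, hup]
        rw [lintegral_indicator_one (hS i), ← volume_pi]

end LWaux

section LWmain

open Finset Function

private lemma coord_le_norm {n : ℕ} (x : EuclideanSpace ℝ (Fin n)) (j : Fin n) :
    |x j| ≤ ‖x‖ := by
  rw [EuclideanSpace.norm_eq]
  have h1 : |x j| = Real.sqrt (‖x j‖ ^ 2) := by
    rw [Real.sqrt_sq_eq_abs, Real.norm_eq_abs, abs_abs]
  rw [h1]
  apply Real.sqrt_le_sqrt
  exact Finset.single_le_sum (fun i _ => sq_nonneg ‖x i‖) (Finset.mem_univ j)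

end LWmain

set_option maxHeartbeats 1000000

/-- Loomis–Whitney: for a convex body `C` in `ℝⁿ` and `P i` the orthogonal projection
onto the hyperplane orthogonal to the `i`-th standard basis vector,
`|C|^(n-1) ≤ ∏ i, |P i C|`. -/
theorem stmt_9 (n : ℕ) (C : Set (EuclideanSpace ℝ (Fin n)))
    (hC : Convex ℝ C) (hCc : IsCompact C) (hCi : (interior C).Nonempty) :
    volume C ^ (n - 1) ≤
      ∏ i : Fin n, μH[(n : ℝ) - 1]
        ((fun x => x - ⟪EuclideanSpace.single i (1 : ℝ), x⟫ •
          EuclideanSpace.single i (1 : ℝ)) '' C) := by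
  classical
  obtain ⟨x₀, hx₀⟩ := hCi
  have hx₀C : x₀ ∈ C := interior_subset hx₀
  rcases Nat.lt_or_ge n 2 with hn | hn
  · -- degenerate cases n = 0, 1
    interval_cases n
    · simp
    · rw [Nat.sub_self, pow_zero, Fin.prod_univ_one]
      have h0 : ((1 : ℕ) : ℝ) - 1 = 0 := by norm_num
      rw [h0]
      exact Measure.one_le_hausdorffMeasure_zero_of_nonempty
        ⟨_, Set.mem_image_of_mem _ hx₀C⟩
  · -- main case: n ≥ 2
    set e := (MeasurableEquiv.toLp 2 (Fin n → ℝ)).symm with he_def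
    have hecont : Continuous (⇑e) := by
      rw [MeasurableEquiv.coe_toLp_symm]
      exact PiLp.continuous_ofLp 2 _
    set K : Set (Fin n → ℝ) := ⇑e '' C with hK_def
    have hKc : IsCompact K := hCc.image hecont
    have h2 : 2 ≤ Fintype.card (Fin n) := by simpa using hn
    have hn1 : 1 ≤ n := le_trans one_le_two hn
    have hcast : ((n - 1 : ℕ) : ℝ) = (n : ℝ) - 1 := by
      push_cast [Nat.cast_sub hn1]; ring
    have hd0 : (0 : ℝ) ≤ (n : ℝ) - 1 := by
      have : (2 : ℝ) ≤ (n : ℝ) := by exact_mod_cast hn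
      linarith
    -- the orthogonal projections from the statement
    set Q : Fin n → EuclideanSpace ℝ (Fin n) → EuclideanSpace ℝ (Fin n) :=
      fun i x => x - ⟪EuclideanSpace.single i (1 : ℝ), x⟫ •
        EuclideanSpace.single i (1 : ℝ) with hQ_def
    -- the coordinate-deletion maps, on the Euclidean and pi sides
    set L : ∀ i : Fin n, EuclideanSpace ℝ (Fin n) → (↥(Finset.univ.erase i) → ℝ) :=
      fun i x j => x (j : Fin n) with hL_def
    set π : ∀ i : Fin n, (Fin n → ℝ) → (↥(Finset.univ.erase i) → ℝ) :=
      fun i x j => x (j : Fin n) with hπ_def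
    have hLip : ∀ i, LipschitzWith 1 (L i) := by
      intro i
      apply LipschitzWith.of_dist_le_mul
      intro x y
      rw [NNReal.coe_one, one_mul]
      refine (dist_pi_le_iff dist_nonneg).2 fun j => ?_
      have : dist (x (j : Fin n)) (y (j : Fin n)) = |(x - y) (j : Fin n)| := by
        simp [Real.dist_eq]
      rw [hL_def, this, dist_eq_norm]
      exact coord_le_norm (x - y) _
    have himg : ∀ i, L i '' (Q i '' C) = π i '' K := by
      intro i
      rw [hK_def, ← Set.image_comp, ← Set.image_comp]
      have hfun : (L i ∘ Q i) = (π i ∘ ⇑e) := by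
        funext x j
        have hj : (j : Fin n) ≠ i := (Finset.mem_erase.mp j.2).1
        simp only [hL_def, hπ_def, hQ_def, Function.comp_apply,
          MeasurableEquiv.coe_toLp_symm]
        simp [EuclideanSpace.single_apply, hj]
        rfl
      rw [hfun]
    have hcard : ∀ i : Fin n,
        ((Fintype.card ↥(Finset.univ.erase i) : ℕ) : ℝ) = (n : ℝ) - 1 := by
      intro i
      rw [Fintype.card_coe, Finset.card_erase_of_mem (Finset.mem_univ i),
        Finset.card_univ, Fintype.card_fin, hcast]
    have hMeasBound : ∀ i : Fin n,
        volume (π i '' K) ≤ μH[(n : ℝ) - 1] (Q i '' C) := by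
      intro i
      have h1 : (μH[(Fintype.card ↥(Finset.univ.erase i) : ℝ)] :
          Measure (↥(Finset.univ.erase i) → ℝ)) = volume := hausdorffMeasure_pi_real
      rw [← h1, hcard i, ← himg i]
      calc μH[(n : ℝ) - 1] (L i '' (Q i '' C))
          ≤ ((1 : ℝ≥0) : ℝ≥0∞) ^ ((n : ℝ) - 1) * μH[(n : ℝ) - 1] (Q i '' C) :=
            (hLip i).hausdorffMeasure_image_le hd0 _
        _ = μH[(n : ℝ) - 1] (Q i '' C) := by
            simp
    -- volume of C equals volume of K
    have hvol : volume C = volume K := by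
      rw [hK_def, MeasurableEquiv.image_eq_preimage_symm]
      exact (((EuclideanSpace.volume_preserving_symm_measurableEquiv_toLp (Fin n)).symm
        (MeasurableEquiv.toLp 2 (Fin n → ℝ)).symm).measure_preimage
        hCc.measurableSet.nullMeasurableSet).symm
    -- apply Loomis-Whitney on the pi side
    have hLW := lw_pi h2 hKc
    have hne : (n : ℝ) - 1 ≠ 0 := by
      have h2' : (2 : ℝ) ≤ (n : ℝ) := by exact_mod_cast hn
      intro h; linarith
    have hrpow : ∀ a : ℝ≥0∞,
        (a ^ (((Fintype.card (Fin n) : ℝ) - 1)⁻¹)) ^ (n - 1 : ℕ) = a := by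
      intro a
      rw [← ENNReal.rpow_natCast (a ^ (((Fintype.card (Fin n) : ℝ) - 1)⁻¹)) (n - 1),
        ← ENNReal.rpow_mul, hcast, Fintype.card_fin, inv_mul_cancel₀ hne,
        ENNReal.rpow_one]
    calc volume C ^ (n - 1) = volume K ^ (n - 1) := by rw [hvol]
      _ ≤ (∏ i : Fin n,
            (volume (π i '' K)) ^ (((Fintype.card (Fin n) : ℝ) - 1)⁻¹)) ^ (n - 1) := by
          exact pow_le_pow_left' hLW _
      _ = ∏ i : Fin n, volume (π i '' K) := by
          rw [← Finset.prod_pow]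
          exact Finset.prod_congr rfl fun i _ => hrpow _
      _ ≤ ∏ i : Fin n, μH[(n : ℝ) - 1] (Q i '' C) :=
          Finset.prod_le_prod' fun i _ => hMeasBound i
end

section
/- (Petty's intertwining) If C is a convex body in R^n, T a linear operator on R^n with det T = 1, and Π*(C) denotes the unit ball of the norm θ ↦ |P_θ C| (extended by homogeneity to a norm via the support-function representation), then Π*(TC) = T(Π*(C)). -/
open MeasureTheory
open scoped RealInnerProductSpace

/-- The positively homogeneous extension of the shadow function `θ ↦ |P_θ C|`:
for `x ≠ 0` its value is `‖x‖ * |P_{x/‖x‖} C|`, and it vanishes at `0`. -/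
noncomputable def shadowNorm (n : ℕ) (C : Set (EuclideanSpace ℝ (Fin n)))
    (x : EuclideanSpace ℝ (Fin n)) : ℝ :=
  ‖x‖ * (μH[(n : ℝ) - 1]
    ((fun y => y - ⟪‖x‖⁻¹ • x, y⟫ • (‖x‖⁻¹ • x)) '' C)).toReal

/-- `Π*(C)`, the unit ball of the (extended) shadow norm of `C`; equivalently the polar
of the projection body of `C`. -/
noncomputable def piStar (n : ℕ) (C : Set (EuclideanSpace ℝ (Fin n))) :
    Set (EuclideanSpace ℝ (Fin n)) :=
  {x | shadowNorm n C x ≤ 1}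

open Set Module
open scoped Pointwise ENNReal

lemma my_Icc_add_Icc {a b c d : ℝ} (hab : a ≤ b) (hcd : c ≤ d) :
    Set.Icc a b + Set.Icc c d = Set.Icc (a + c) (b + d) := by
  apply Set.Subset.antisymm
  · rintro x ⟨p, hp, q, hq, rfl⟩
    exact ⟨add_le_add hp.1 hq.1, add_le_add hp.2 hq.2⟩
  · intro x hx
    refine ⟨min b (x - c), ⟨le_min hab (by linarith [hx.1]), min_le_left _ _⟩,
      x - min b (x - c), ⟨?_, ?_⟩, by ring⟩
    · have := min_le_right b (x - c); linarith
    · have h1 : x - d ≤ b := by linarith [hx.2]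
      have h2 : x - d ≤ x - c := by linarith
      have := le_min h1 h2; linarith

lemma my_oneDim {A : Set ℝ} (hA : Convex ℝ A) (hc : IsCompact A) (hne : A.Nonempty)
    {r : ℝ} (hr : 0 ≤ r) :
    volume (A + Set.Icc 0 r) = volume A + ENNReal.ofReal r := by
  have hIA : A = Set.Icc (sInf A) (sSup A) := by
    apply Set.Subset.antisymm
    · exact fun a ha => ⟨csInf_le hc.bddBelow ha, le_csSup hc.bddAbove ha⟩
    · exact hA.ordConnected.out (hc.sInf_mem hne) (hc.sSup_mem hne)
  have hle : sInf A ≤ sSup A := csInf_le_csSup hne hc.bddBelow hc.bddAbove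
  rw [hIA, my_Icc_add_Icc hle hr, Real.volume_Icc, Real.volume_Icc,
    ← ENNReal.ofReal_add (by linarith) hr]
  ring_nf

lemma my_prodCore {m : ℕ} {K : Set (ℝ × (Fin m → ℝ))} (hK : Convex ℝ K) (hKc : IsCompact K)
    {r : ℝ} (hr : 0 ≤ r) :
    volume (K + Set.Icc (0:ℝ) r ×ˢ ({0} : Set (Fin m → ℝ)))
      = volume K + ENNReal.ofReal r * volume (Prod.snd '' K) := by
  set S := K + Set.Icc (0:ℝ) r ×ˢ ({0} : Set (Fin m → ℝ)) with hS
  have hSc : IsCompact S := hKc.add (isCompact_Icc.prod isCompact_singleton)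
  have hSm : MeasurableSet S := hSc.measurableSet
  have hKm : MeasurableSet K := hKc.measurableSet
  set J := Prod.snd '' K with hJ
  have hJc : IsCompact J := hKc.image continuous_snd
  have hJm : MeasurableSet J := hJc.measurableSet
  have hfib : ∀ y : Fin m → ℝ, ((fun t => (t, y)) ⁻¹' S) = ((fun t => (t, y)) ⁻¹' K) + Set.Icc 0 r := by
    intro y
    ext t
    constructor
    · rintro ⟨p, hp, q, ⟨hq1, hq2⟩, hpq⟩
      have h2 : p.2 = y := by
        have := congrArg Prod.snd hpq
        simp only [Prod.snd_add] at this
        simp only [Set.mem_singleton_iff] at hq2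
        rw [hq2, add_zero] at this; exact this
      refine ⟨p.1, ?_, q.1, hq1, ?_⟩
      · show (p.1, y) ∈ K
        rwa [← h2, Prod.mk.eta]
      · have := congrArg Prod.fst hpq
        simpa using this
    · rintro ⟨s, hs, q, hq, rfl⟩
      exact ⟨(s, y), hs, (q, 0), ⟨hq, rfl⟩, by simp⟩
  have hpoint : ∀ y : Fin m → ℝ,
      volume ((fun t => (t, y)) ⁻¹' S)
        = volume ((fun t => (t, y)) ⁻¹' K) + J.indicator (fun _ => ENNReal.ofReal r) y := by
    intro y
    rw [hfib y]
    by_cases hy : y ∈ J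
    · have hconv : Convex ℝ ((fun t => (t, y)) ⁻¹' K) := by
        intro t ht s hs a b ha hb hab
        have := hK ht hs ha hb hab
        have h2 : a • ((t : ℝ), y) + b • ((s : ℝ), y) = (a * t + b * s, y) := by
          simp [Prod.ext_iff, smul_eq_mul, ← add_smul, hab]
        rw [h2] at this
        exact this
      have hcl : IsClosed ((fun t => (t, y)) ⁻¹' K) :=
        hKc.isClosed.preimage (by fun_prop)
      have hbdd : Bornology.IsBounded ((fun t => (t, y)) ⁻¹' K) := by
        apply ((hKc.image continuous_fst).isBounded).subset
        intro t ht
        exact ⟨(t, y), ht, rfl⟩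
      have hcomp : IsCompact ((fun t => (t, y)) ⁻¹' K) :=
        Metric.isCompact_of_isClosed_isBounded hcl hbdd
      have hne : ((fun t => (t, y)) ⁻¹' K).Nonempty := by
        obtain ⟨p, hp, hp2⟩ := hy
        exact ⟨p.1, by simpa [← hp2, Prod.mk.eta] using hp⟩
      rw [my_oneDim hconv hcomp hne hr, Set.indicator_of_mem hy]
    · have hempty : ((fun t => (t, y)) ⁻¹' K) = ∅ := by
        ext t
        simp only [Set.mem_preimage, Set.mem_empty_iff_false, iff_false]
        intro h
        exact hy ⟨(t, y), h, rfl⟩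
      rw [hempty, Set.empty_add, Set.indicator_of_notMem hy]
      simp
  have hvol : (volume : Measure (ℝ × (Fin m → ℝ))) = (volume : Measure ℝ).prod volume :=
    Measure.volume_eq_prod _ _
  rw [hvol, Measure.prod_apply_symm hSm, Measure.prod_apply_symm hKm]
  calc ∫⁻ y, volume ((fun t => (t, y)) ⁻¹' S)
      = ∫⁻ y, (volume ((fun t => (t, y)) ⁻¹' K) + J.indicator (fun _ => ENNReal.ofReal r) y) := by
        simp_rw [hpoint]
    _ = (∫⁻ y, volume ((fun t => (t, y)) ⁻¹' K)) + ∫⁻ y, J.indicator (fun _ => ENNReal.ofReal r) y :=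
        lintegral_add_left (measurable_measure_prodMk_right hKm) _
    _ = (∫⁻ y, volume ((fun t => (t, y)) ⁻¹' K)) + ENNReal.ofReal r * volume J := by
        rw [lintegral_indicator_const hJm]

lemma my_image_add {G H : Type*} [AddCommMonoid G] [AddCommMonoid H] (f : G → H)
    (hf : ∀ a b, f (a + b) = f a + f b) (A B : Set G) : f '' (A + B) = f '' A + f '' B := by
  ext z
  constructor
  · rintro ⟨w, ⟨a, ha, b, hb, rfl⟩, rfl⟩
    exact ⟨f a, ⟨a, ha, rfl⟩, f b, ⟨b, hb, rfl⟩, (hf a b).symm⟩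
  · rintro ⟨_, ⟨a, ha, rfl⟩, _, ⟨b, hb, rfl⟩, rfl⟩
    exact ⟨a + b, ⟨a, ha, b, hb, rfl⟩, hf a b⟩

lemma hausHaar (m : ℕ) :
    (μH[(m:ℝ)] : Measure (EuclideanSpace ℝ (Fin m))).IsAddHaarMeasure := by
  have h := MeasureTheory.isAddHaarMeasure_hausdorffMeasure (E := EuclideanSpace ℝ (Fin m))
  rwa [finrank_euclideanSpace_fin] at h

noncomputable def cH (m : ℕ) : NNReal :=
  haveI := hausHaar m
  Measure.addHaarScalarFactor (μH[(m:ℝ)] : Measure (EuclideanSpace ℝ (Fin m))) volume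

lemma cH_spec (m : ℕ) :
    (μH[(m:ℝ)] : Measure (EuclideanSpace ℝ (Fin m))) = cH m • volume := by
  haveI := hausHaar m
  exact Measure.isAddLeftInvariant_eq_smul _ _

lemma cH_pos (m : ℕ) : cH m ≠ 0 := by
  haveI := hausHaar m
  exact (Measure.addHaarScalarFactor_pos_of_isAddHaarMeasure _ _).ne'

noncomputable def myPi (m : ℕ) (z : EuclideanSpace ℝ (Fin (m+1))) : EuclideanSpace ℝ (Fin m) :=
  WithLp.toLp 2 (fun k => z k.succ)

noncomputable def myIota (m : ℕ) (w : EuclideanSpace ℝ (Fin m)) : EuclideanSpace ℝ (Fin (m+1)) :=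
  WithLp.toLp 2 (Fin.cons (0:ℝ) (WithLp.ofLp w))

@[simp] lemma myIota_zero (m : ℕ) (w : EuclideanSpace ℝ (Fin m)) : myIota m w 0 = 0 := rfl
@[simp] lemma myIota_succ (m : ℕ) (w : EuclideanSpace ℝ (Fin m)) (k : Fin m) :
    myIota m w k.succ = w k := by simp [myIota]
@[simp] lemma myPi_apply (m : ℕ) (z : EuclideanSpace ℝ (Fin (m+1))) (k : Fin m) :
    myPi m z k = z k.succ := rfl

lemma myIota_isometry (m : ℕ) : Isometry (myIota m) := by
  apply Isometry.of_dist_eq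
  intro w v
  rw [EuclideanSpace.dist_eq, EuclideanSpace.dist_eq, Fin.sum_univ_succ]
  simp

lemma stepA (m : ℕ) (C : Set (EuclideanSpace ℝ (Fin (m+1)))) :
    μH[(m:ℝ)] ((fun z => z - z 0 • EuclideanSpace.single (0 : Fin (m+1)) (1:ℝ)) '' C)
      = (cH m : ℝ≥0∞) * volume (myPi m '' C) := by
  have hfun : (myIota m ∘ myPi m) = fun z : EuclideanSpace ℝ (Fin (m+1)) =>
      z - z 0 • EuclideanSpace.single (0 : Fin (m+1)) (1:ℝ) := by
    funext z
    ext j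
    refine Fin.cases ?_ (fun k => ?_) j
    · simp [EuclideanSpace.single_apply]
    · simp [EuclideanSpace.single_apply, Fin.succ_ne_zero]
  rw [← hfun, Set.image_comp,
    (myIota_isometry m).hausdorffMeasure_image (Or.inl (by positivity)) _, cH_spec m]
  simp only [Measure.smul_apply, ENNReal.smul_def, smul_eq_mul]

lemma my_key0 (m : ℕ) {C : Set (EuclideanSpace ℝ (Fin (m+1)))} (hC : Convex ℝ C)
    (hCc : IsCompact C) {r : ℝ} (hr : 0 ≤ r) :
    (cH m : ℝ≥0∞) * volume (C + (fun t : ℝ =>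
        t • EuclideanSpace.single (0 : Fin (m+1)) (1:ℝ)) '' Set.Icc 0 r)
      = (cH m : ℝ≥0∞) * volume C
        + ENNReal.ofReal r * μH[(m:ℝ)]
          ((fun z => z - z 0 • EuclideanSpace.single (0 : Fin (m+1)) (1:ℝ)) '' C) := by
  classical
  set θ' : EuclideanSpace ℝ (Fin (m+1)) := EuclideanSpace.single (0 : Fin (m+1)) (1:ℝ) with hθ'
  set Φ : EuclideanSpace ℝ (Fin (m+1)) ≃ᵐ ℝ × (Fin m → ℝ) :=
    (MeasurableEquiv.toLp 2 (Fin (m+1) → ℝ)).symm.trans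
      (MeasurableEquiv.piFinSuccAbove (fun _ : Fin (m+1) => ℝ) 0) with hΦdef
  have hΦmp : MeasurePreserving Φ volume volume := by
    exact (volume_preserving_piFinSuccAbove (fun _ : Fin (m+1) => ℝ) 0).comp
      (EuclideanSpace.volume_preserving_symm_measurableEquiv_toLp (Fin (m+1)))
  have hΦapply : ∀ z : EuclideanSpace ℝ (Fin (m+1)), Φ z = (z 0, fun k => z k.succ) := by
    intro z
    simp only [hΦdef, MeasurableEquiv.trans_apply, MeasurableEquiv.piFinSuccAbove_apply,
      Fin.insertNthEquiv_symm_apply]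
    refine Prod.ext rfl ?_
    funext k
    simp only [Fin.removeNth, Fin.zero_succAbove]
    rfl
  have hΦadd : ∀ a b : EuclideanSpace ℝ (Fin (m+1)), Φ (a + b) = Φ a + Φ b := by
    intro a b
    rw [hΦapply, hΦapply, hΦapply]
    simp only [Prod.mk_add_mk, Prod.mk.injEq]
    exact ⟨by simp [PiLp.add_apply], by funext k; simp [PiLp.add_apply]⟩
  have hΦsmul : ∀ (c : ℝ) (a : EuclideanSpace ℝ (Fin (m+1))), Φ (c • a) = c • Φ a := by
    intro c a
    rw [hΦapply, hΦapply]
    simp only [Prod.smul_mk, Prod.mk.injEq]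
    exact ⟨by simp [PiLp.smul_apply], by funext k; simp [PiLp.smul_apply]⟩
  have hΦcont : Continuous (⇑Φ) := by
    have : ⇑Φ = fun z : EuclideanSpace ℝ (Fin (m+1)) => (z 0, fun k => z k.succ) := funext hΦapply
    rw [this]
    exact Continuous.prodMk (EuclideanSpace.proj (0 : Fin (m+1))).continuous
      (continuous_pi fun k => (EuclideanSpace.proj (k.succ : Fin (m+1))).continuous)
  have hvolimg : ∀ S : Set (EuclideanSpace ℝ (Fin (m+1))), MeasurableSet S → volume (⇑Φ '' S) = volume S := by
    intro S hS
    rw [MeasurableEquiv.image_eq_preimage_symm]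
    exact (hΦmp.symm).measure_preimage hS.nullMeasurableSet
  set seg := (fun t : ℝ => t • θ') '' Set.Icc 0 r with hseg
  have hsegc : IsCompact seg := isCompact_Icc.image (continuous_id.smul continuous_const)
  have hCseg : IsCompact (C + seg) := hCc.add hsegc
  set K := ⇑Φ '' C with hK
  have hKconv : Convex ℝ K := hC.is_linear_image ⟨hΦadd, hΦsmul⟩
  have hKc : IsCompact K := hCc.image hΦcont
  have himg_seg : ⇑Φ '' seg = Set.Icc (0:ℝ) r ×ˢ ({0} : Set (Fin m → ℝ)) := by
    rw [hseg, ← Set.image_comp]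
    have : (⇑Φ ∘ fun t : ℝ => t • θ') = fun t : ℝ => ((t, 0) : ℝ × (Fin m → ℝ)) := by
      funext t
      simp only [Function.comp_apply, hΦapply]
      refine Prod.ext ?_ ?_
      · simp [hθ', PiLp.smul_apply, EuclideanSpace.single_apply]
      · funext k
        simp [hθ', PiLp.smul_apply, EuclideanSpace.single_apply, Fin.succ_ne_zero]
    rw [this]
    ext ⟨p, q⟩
    simp only [Set.mem_image, Set.mem_prod, Set.mem_Icc, Set.mem_singleton_iff, Prod.mk.injEq]
    constructor
    · rintro ⟨t, ht, rfl, rfl⟩; exact ⟨ht, rfl⟩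
    · rintro ⟨hp, rfl⟩; exact ⟨p, hp, rfl, rfl⟩
  have hsndK : volume (Prod.snd '' K) = volume (myPi m '' C) := by
    have h1 : Prod.snd '' K = (fun z : EuclideanSpace ℝ (Fin (m+1)) => (fun k => z k.succ : Fin m → ℝ)) '' C := by
      rw [hK, ← Set.image_comp]
      apply Set.image_congr'
      intro z
      simp only [Function.comp_apply, hΦapply]
    have hmeas : MeasurableSet ((fun z : EuclideanSpace ℝ (Fin (m+1)) => (fun k => z k.succ : Fin m → ℝ)) '' C) := by
      refine (hCc.image ?_).measurableSet
      exact continuous_pi fun k => (EuclideanSpace.proj (k.succ : Fin (m+1))).continuous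
    have h2 := (EuclideanSpace.volume_preserving_symm_measurableEquiv_toLp (Fin m)).measure_preimage
      hmeas.nullMeasurableSet
    have h3 : (MeasurableEquiv.toLp 2 (Fin m → ℝ)).symm ⁻¹'
        ((fun z : EuclideanSpace ℝ (Fin (m+1)) => (fun k => z k.succ : Fin m → ℝ)) '' C) = myPi m '' C := by
      ext w
      constructor
      · rintro ⟨c, hc, hcw⟩
        exact ⟨c, hc, WithLp.ofLp_injective 2 hcw⟩
      · rintro ⟨c, hc, hcw⟩
        exact ⟨c, hc, congrArg WithLp.ofLp hcw⟩
    rw [h1, ← h2, h3]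
  calc (cH m : ℝ≥0∞) * volume (C + seg)
      = (cH m : ℝ≥0∞) * volume (K + Set.Icc (0:ℝ) r ×ˢ ({0} : Set (Fin m → ℝ))) := by
        rw [← hvolimg _ hCseg.measurableSet, my_image_add _ hΦadd, himg_seg]
    _ = (cH m : ℝ≥0∞) * (volume K + ENNReal.ofReal r * volume (Prod.snd '' K)) := by
        rw [my_prodCore hKconv hKc hr]
    _ = (cH m : ℝ≥0∞) * volume C
        + ENNReal.ofReal r * ((cH m : ℝ≥0∞) * volume (myPi m '' C)) := by
        rw [hsndK, hvolimg C hCc.measurableSet]; ring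
    _ = _ := by rw [stepA]

lemma my_seg_eq {V : Type*} [NormedAddCommGroup V] [NormedSpace ℝ V] (w : V) {c : ℝ}
    (hc : 0 ≤ c) :
    segment ℝ (0:V) (c • w) = (fun t : ℝ => t • w) '' Set.Icc 0 c := by
  rw [segment_eq_image]
  have h1 : (fun θ : ℝ => (1 - θ) • (0:V) + θ • (c • w))
      = (fun s : ℝ => s • w) ∘ (fun t : ℝ => t * c) := by
    funext t
    simp [smul_smul]
  rw [h1, Set.image_comp, image_mul_right_Icc zero_le_one hc]
  norm_num

lemma my_seg_eq' {V : Type*} [NormedAddCommGroup V] [NormedSpace ℝ V] (w : V) :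
    segment ℝ (0:V) w = (fun t : ℝ => t • w) '' Set.Icc 0 1 := by
  have := my_seg_eq w zero_le_one
  rwa [one_smul] at this

lemma my_master {n : ℕ} {C : Set (EuclideanSpace ℝ (Fin n))} (hC : Convex ℝ C)
    (hCc : IsCompact C) (x : EuclideanSpace ℝ (Fin n)) :
    shadowNorm n C x
      = (cH (n-1)).toReal * ((volume (C + segment ℝ 0 x)).toReal - (volume C).toReal) := by
  classical
  by_cases hx : x = 0
  · have h0 : C + segment ℝ (0 : EuclideanSpace ℝ (Fin n)) 0 = C := by
      rw [segment_same]
      ext z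
      constructor
      · rintro ⟨a, ha, b, hb, rfl⟩
        simp only [Set.mem_singleton_iff] at hb
        subst hb
        simpa using ha
      · intro hz
        exact ⟨z, hz, 0, rfl, add_zero z⟩
    subst hx
    simp [shadowNorm, h0]
  · obtain ⟨m, rfl⟩ : ∃ m, n = m + 1 := by
      cases n with
      | zero => exact absurd (by ext i; exact i.elim0 : x = 0) hx
      | succ m => exact ⟨m, rfl⟩
    simp only [shadowNorm]
    set θ : EuclideanSpace ℝ (Fin (m+1)) := ‖x‖⁻¹ • x with hθdef
    have hθ : ‖θ‖ = 1 := norm_smul_inv_norm hx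
    have hxθ : x = ‖x‖ • θ := by
      rw [hθdef, smul_smul, mul_inv_cancel₀ (norm_ne_zero_iff.2 hx), one_smul]
    -- orthonormal basis with b 0 = θ
    have hv : Orthonormal ℝ (Set.restrict {(0 : Fin (m+1))} (fun _ => θ)) := by
      rw [orthonormal_iff_ite]
      intro i j
      have hij : i = j := Subsingleton.elim i j
      subst hij
      simp only [eq_self_iff_true, if_true, Set.restrict_apply]
      rw [real_inner_self_eq_norm_mul_norm]
      change ‖θ‖ * ‖θ‖ = 1
      rw [hθ]
      norm_num
    obtain ⟨b, hb⟩ := Orthonormal.exists_orthonormalBasis_extension_of_card_eq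
      (𝕜 := ℝ) (by simp) hv
    have hbθ : b 0 = θ := hb 0 rfl
    set e := b.repr with hedef
    have heθ : e θ = EuclideanSpace.single 0 1 := by
      rw [← hbθ, hedef]
      exact b.repr_self 0
    have hvol : ∀ S : Set (EuclideanSpace ℝ (Fin (m+1))), MeasurableSet S →
        volume (⇑e '' S) = volume S := by
      intro S hS
      have himg : ⇑e '' S = ⇑e.symm ⁻¹' S := by
        ext z
        constructor
        · rintro ⟨w, hw, rfl⟩
          simpa using hw
        · intro hz
          exact ⟨e.symm z, hz, by simp⟩
      rw [himg]
      exact b.measurePreserving_repr_symm.measure_preimage hS.nullMeasurableSet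
    have hC' : Convex ℝ (⇑e '' C) := hC.is_linear_image ⟨e.map_add, e.map_smul⟩
    have hCc' : IsCompact (⇑e '' C) := hCc.image e.continuous
    have himghaus : μH[(m:ℝ)]
        ((fun z => z - z 0 • EuclideanSpace.single (0 : Fin (m+1)) (1:ℝ)) '' (⇑e '' C))
          = μH[(m:ℝ)] ((fun y => y - ⟪θ, y⟫ • θ) '' C) := by
      rw [← Set.image_comp]
      have hcomp : ((fun z => z - z 0 • EuclideanSpace.single (0 : Fin (m+1)) (1:ℝ)) ∘ ⇑e)
          = ⇑e ∘ (fun y => y - ⟪θ, y⟫ • θ) := by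
        funext y
        simp only [Function.comp_apply]
        have h00 : ⟪θ, y⟫ = e y 0 := by
          rw [← LinearIsometryEquiv.inner_map_map e, heθ, EuclideanSpace.inner_single_left]
          simp
        rw [map_sub, LinearIsometryEquiv.map_smul, heθ, h00]
      rw [hcomp, Set.image_comp]
      exact e.isometry.hausdorffMeasure_image (Or.inl (by positivity)) _
    have hsegcomp : IsCompact (segment ℝ (0 : EuclideanSpace ℝ (Fin (m+1))) x) := by
      rw [my_seg_eq' x]
      exact isCompact_Icc.image (continuous_id.smul continuous_const)
    have hCsegc : IsCompact (C + segment ℝ 0 x) := hCc.add hsegcomp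
    have hsegtrans : ⇑e '' (C + segment ℝ 0 x)
        = ⇑e '' C + (fun t : ℝ => t • EuclideanSpace.single (0 : Fin (m+1)) (1:ℝ)) '' Set.Icc 0 ‖x‖ := by
      rw [my_image_add ⇑e e.map_add]
      have h1 : ⇑e '' segment ℝ 0 x = segment ℝ 0 (e x) := by
        rw [my_seg_eq' x, my_seg_eq' (e x), ← Set.image_comp]
        congr 1
        funext t
        simp [LinearIsometryEquiv.map_smul]
      have hex : e x = ‖x‖ • EuclideanSpace.single (0 : Fin (m+1)) (1:ℝ) := by
        conv_lhs => rw [hxθ]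
        rw [LinearIsometryEquiv.map_smul, heθ]
      rw [h1, hex, my_seg_eq _ (norm_nonneg x)]
    have hkey := my_key0 m hC' hCc' (norm_nonneg x)
    rw [← hsegtrans, hvol _ hCsegc.measurableSet, hvol _ hCc.measurableSet, himghaus] at hkey
    -- finiteness
    set A := volume C with hA
    set B := volume (C + segment ℝ 0 x) with hB
    set H := μH[(m:ℝ)] ((fun y => y - ⟪θ, y⟫ • θ) '' C) with hH
    have hAfin : A ≠ ⊤ := hCc.measure_lt_top.ne
    have hBfin : B ≠ ⊤ := hCsegc.measure_lt_top.ne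
    have hcne : (cH m : ℝ≥0∞) ≠ ⊤ := ENNReal.coe_ne_top
    have hc0 : (cH m : ℝ≥0∞) ≠ 0 := by
      simpa using cH_pos m
    have hxne : ENNReal.ofReal ‖x‖ ≠ 0 := by
      simp [ENNReal.ofReal_eq_zero, not_le, norm_pos_iff, hx]
    have hHfin : H ≠ ⊤ := by
      intro hHtop
      rw [hHtop, ENNReal.mul_top hxne] at hkey
      have : (cH m : ℝ≥0∞) * B ≠ ⊤ := ENNReal.mul_ne_top hcne hBfin
      rw [hkey] at this
      simp at this
    -- pass to reals
    have h1 : ((cH m : ℝ≥0∞) * B).toReal = ((cH m : ℝ≥0∞) * A).toReal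
        + (ENNReal.ofReal ‖x‖ * H).toReal := by
      rw [hkey, ENNReal.toReal_add (ENNReal.mul_ne_top hcne hAfin)
        (ENNReal.mul_ne_top ENNReal.ofReal_ne_top hHfin)]
    rw [ENNReal.toReal_mul, ENNReal.toReal_mul, ENNReal.toReal_mul,
      ENNReal.toReal_ofReal (norm_nonneg x)] at h1
    have hexp : ((m+1 : ℕ) : ℝ) - 1 = (m : ℝ) := by push_cast; ring
    rw [hexp]
    simp only [Nat.add_sub_cancel]
    rw [← hH]
    simp only [ENNReal.coe_toReal] at h1
    linarith [h1]

/-- Petty's intertwining property: if `T` is a linear operator on `ℝⁿ` of determinant `1`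
and `C` is a convex body, then `Π*(T C) = T (Π*(C))`. -/
theorem stmt_12 (n : ℕ) (C : Set (EuclideanSpace ℝ (Fin n)))
    (hC : Convex ℝ C) (hCc : IsCompact C) (hCi : (interior C).Nonempty)
    (T : EuclideanSpace ℝ (Fin n) →ₗ[ℝ] EuclideanSpace ℝ (Fin n))
    (hT : LinearMap.det T = 1) :
    piStar n (T '' C) = T '' piStar n C := by
  classical
  have hTdet : LinearMap.det T ≠ 0 := by rw [hT]; exact one_ne_zero
  let e := T.equivOfDetNeZero hTdet
  have hTC_conv : Convex ℝ (⇑T '' C) := hC.linear_image T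
  have hTC_comp : IsCompact (⇑T '' C) := hCc.image T.continuous_of_finiteDimensional
  have hvolT : ∀ S : Set (EuclideanSpace ℝ (Fin n)), volume (⇑T '' S) = volume S := by
    intro S
    rw [Measure.addHaar_image_linearMap volume T S, hT]
    simp
  have hTsymm : ∀ x, T (e.symm x) = x := fun x => e.apply_symm_apply x
  have hkey : ∀ x, shadowNorm n (⇑T '' C) x = shadowNorm n C (e.symm x) := by
    intro x
    rw [my_master hTC_conv hTC_comp x, my_master hC hCc (e.symm x)]
    have hseg : segment ℝ (0 : EuclideanSpace ℝ (Fin n)) x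
        = ⇑T '' segment ℝ 0 (e.symm x) := by
      have hfun : (⇑T ∘ fun t : ℝ => t • e.symm x) = fun t : ℝ => t • x := by
        funext t
        simp only [Function.comp_apply, LinearMap.map_smul]
        rw [hTsymm x]
      rw [my_seg_eq' (e.symm x), ← Set.image_comp, hfun, my_seg_eq' x]
    have h2 : ⇑T '' C + segment ℝ 0 x = ⇑T '' (C + segment ℝ 0 (e.symm x)) := by
      rw [my_image_add ⇑T T.map_add, ← hseg]
    rw [h2, hvolT, hvolT]
  ext x
  simp only [piStar, Set.mem_setOf_eq, Set.mem_image]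
  rw [hkey x]
  constructor
  · intro h
    exact ⟨e.symm x, h, hTsymm x⟩
  · rintro ⟨y, hy, rfl⟩
    rwa [show e.symm (T y) = y from e.symm_apply_apply y]
end
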